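/- There exists a cubic graph of order 18 whose coalition number equals 9. -/

import Mathlib

set_option linter.unusedSectionVars false


/-- `S` dominates the vertex `v`: `v ∈ S` or some vertex of `S` is adjacent to `v`. -/
def SimpleGraph.DominatesVert {V : Type*} (G : SimpleGraph V) (S : Finset V) (v : V) : Prop :=
  v ∈ S ∨ ∃ u ∈ S, G.Adj u v

/-- `S` is a dominating set of `G`. -/
def SimpleGraph.IsDominatingSet {V : Type*} (G : SimpleGraph V) (S : Finset V) : Prop :=
  ∀ v, G.DominatesVert S v

/-- A coalition partition of `G`: a partition of the vertex set into nonempty parts,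
each of which is either a dominating singleton, or a non-dominating set forming a
coalition (dominating union) with another non-dominating part. -/
def SimpleGraph.IsCoalitionPartition {V : Type*} [Fintype V] [DecidableEq V]
    (G : SimpleGraph V) (P : Finset (Finset V)) : Prop :=
  (∀ A ∈ P, A.Nonempty) ∧
  (∀ A ∈ P, ∀ B ∈ P, A ≠ B → Disjoint A B) ∧
  (∀ v : V, ∃ A ∈ P, v ∈ A) ∧
  ∀ A ∈ P,
    (∃ v, A = {v} ∧ G.IsDominatingSet A) ∨
    (¬ G.IsDominatingSet A ∧
      ∃ B ∈ P, B ≠ A ∧ ¬ G.IsDominatingSet B ∧ G.IsDominatingSet (A ∪ B))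

/-- The coalition number of `G`: the maximum number of parts in a coalition partition. -/
noncomputable def SimpleGraph.coalitionNumber {V : Type*} [Fintype V] [DecidableEq V]
    (G : SimpleGraph V) : ℕ :=
  sSup {k | ∃ P : Finset (Finset V), G.IsCoalitionPartition P ∧ P.card = k}


namespace CoalitionAux

open Finset SimpleGraph

instance decDomVert {V : Type*} [DecidableEq V] (G : SimpleGraph V) [DecidableRel G.Adj]
    (S : Finset V) (v : V) : Decidable (G.DominatesVert S v) := by
  unfold SimpleGraph.DominatesVert; infer_instance

instance decDom {V : Type*} [Fintype V] [DecidableEq V] (G : SimpleGraph V) [DecidableRel G.Adj]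
    (S : Finset V) : Decidable (G.IsDominatingSet S) := by
  unfold SimpleGraph.IsDominatingSet; infer_instance

variable {V : Type*} [Fintype V] [DecidableEq V] {G : SimpleGraph V} [DecidableRel G.Adj]

/-- closed neighborhood -/
def Nc (G : SimpleGraph V) [DecidableRel G.Adj] (v : V) : Finset V :=
  insert v (G.neighborFinset v)

lemma dominatesVert_iff {S : Finset V} {v : V} :
    G.DominatesVert S v ↔ (S ∩ Nc G v).Nonempty := by
  unfold SimpleGraph.DominatesVert Nc
  constructor
  · rintro (hv | ⟨u, hu, hadj⟩)
    · exact ⟨v, mem_inter.mpr ⟨hv, mem_insert_self _ _⟩⟩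
    · exact ⟨u, mem_inter.mpr ⟨hu, mem_insert_of_mem ((G.mem_neighborFinset v u).mpr hadj.symm)⟩⟩
  · rintro ⟨u, hu⟩
    rcases mem_inter.mp hu with ⟨huS, huN⟩
    rcases mem_insert.mp huN with rfl | hn
    · exact Or.inl huS
    · exact Or.inr ⟨u, huS, ((G.mem_neighborFinset v u).mp hn).symm⟩

lemma card_Nc (hreg : G.IsRegularOfDegree 3) (v : V) : (Nc G v).card = 4 := by
  unfold Nc
  rw [card_insert_of_notMem (by simp)]
  have := hreg v
  rw [SimpleGraph.degree] at this
  omega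

lemma mem_Nc_comm {u v : V} : u ∈ Nc G v ↔ v ∈ Nc G u := by
  unfold Nc
  simp only [mem_insert, mem_neighborFinset]
  constructor
  · rintro (rfl | h); · exact Or.inl rfl
    · exact Or.inr h.symm
  · rintro (rfl | h); · exact Or.inl rfl
    · exact Or.inr h.symm

lemma dom_card (hV : Fintype.card V = 18) (hreg : G.IsRegularOfDegree 3)
    {S : Finset V} (hS : G.IsDominatingSet S) : 5 ≤ S.card := by
  have hcover : (univ : Finset V) ⊆ S.biUnion (fun u => Nc G u) := by
    intro v _
    obtain ⟨u, hu⟩ := dominatesVert_iff.mp (hS v)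
    rcases mem_inter.mp hu with ⟨huS, huN⟩
    exact mem_biUnion.mpr ⟨u, huS, mem_Nc_comm.mp huN⟩
  have h1 : (univ : Finset V).card ≤ (S.biUnion (fun u => Nc G u)).card := card_le_card hcover
  have h2 : (S.biUnion (fun u => Nc G u)).card ≤ ∑ u ∈ S, (Nc G u).card := card_biUnion_le
  have h3 : ∑ u ∈ S, (Nc G u).card = 4 * S.card := by
    rw [Finset.sum_congr rfl (fun u _ => card_Nc hreg u)]
    simp [mul_comm]
  rw [card_univ, hV] at h1
  omega

lemma dom_mono {S T : Finset V} (hST : S ⊆ T) (hS : G.IsDominatingSet S) :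
    G.IsDominatingSet T := by
  intro v
  rcases hS v with hv | ⟨u, hu, hadj⟩
  · exact Or.inl (hST hv)
  · exact Or.inr ⟨u, hST hu, hadj⟩

section Partition

variable {P : Finset (Finset V)}

lemma sum_card (hP : G.IsCoalitionPartition P) : ∑ A ∈ P, A.card = Fintype.card V := by
  have hU : P.biUnion id = univ := by
    ext v
    simp only [mem_biUnion, id, mem_univ, iff_true]
    exact hP.2.2.1 v
  rw [← Finset.card_univ, ← hU]
  exact (card_biUnion (fun x hx y hy hxy => hP.2.1 x hx y hy hxy)).symm

lemma part_nondom (hV : Fintype.card V = 18) (hreg : G.IsRegularOfDegree 3)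
    (hP : G.IsCoalitionPartition P) {A : Finset V} (hA : A ∈ P) : ¬ G.IsDominatingSet A := by
  intro hdom
  rcases hP.2.2.2 A hA with ⟨v, rfl, _⟩ | ⟨hnd, _⟩
  · have := dom_card hV hreg hdom
    simp at this
  · exact hnd hdom

lemma partner_exists (hV : Fintype.card V = 18) (hreg : G.IsRegularOfDegree 3)
    (hP : G.IsCoalitionPartition P) {A : Finset V} (hA : A ∈ P) :
    ∃ B ∈ P, B ≠ A ∧ G.IsDominatingSet (A ∪ B) := by
  rcases hP.2.2.2 A hA with ⟨v, rfl, hdom⟩ | ⟨_, B, hB, hne, _, hdom⟩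
  · exact absurd hdom (part_nondom hV hreg hP hA)
  · exact ⟨B, hB, hne, hdom⟩

/-- the set of parts forming a dominating union with `A` -/
def pw (G : SimpleGraph V) [DecidableRel G.Adj] (P : Finset (Finset V)) (A : Finset V) :
    Finset (Finset V) :=
  P.filter (fun B => B ≠ A ∧ G.IsDominatingSet (A ∪ B))

lemma mem_pw {A B : Finset V} : B ∈ pw G P A ↔ B ∈ P ∧ B ≠ A ∧ G.IsDominatingSet (A ∪ B) := by
  unfold pw; simp

lemma pw_sub : pw G P A ⊆ P := filter_subset _ _

lemma pw_card_le (hV : Fintype.card V = 18) (hreg : G.IsRegularOfDegree 3)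
    (hP : G.IsCoalitionPartition P) {A : Finset V} (hA : A ∈ P) : (pw G P A).card ≤ 4 := by
  have hnd := part_nondom hV hreg hP hA
  rw [SimpleGraph.IsDominatingSet, not_forall] at hnd
  obtain ⟨w, hw⟩ := hnd
  have hAw : A ∩ Nc G w = ∅ := by
    rw [← not_nonempty_iff_eq_empty]
    exact fun h => hw (dominatesVert_iff.mpr h)
  classical
  set f : Finset V → V := fun B => if h : (B ∩ Nc G w).Nonempty then h.choose else w with hf
  have hfmem : ∀ B ∈ pw G P A, f B ∈ B ∩ Nc G w := by
    intro B hB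
    rcases mem_pw.mp hB with ⟨hBP, hBne, hBdom⟩
    have h1 : ((A ∪ B) ∩ Nc G w).Nonempty := dominatesVert_iff.mp (hBdom w)
    rw [union_inter_distrib_right, hAw, empty_union] at h1
    simp only [hf, dif_pos h1]
    exact h1.choose_spec
  have : (pw G P A).card ≤ (Nc G w).card := by
    apply Finset.card_le_card_of_injOn f
    · intro B hB; exact (mem_inter.mp (hfmem B hB)).2
    · intro B hB B' hB' heq
      have h1 := (mem_inter.mp (hfmem B hB)).1
      have h2 := (mem_inter.mp (hfmem B' hB')).1
      rw [heq] at h1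
      by_contra hne
      have hdisj := hP.2.1 B (pw_sub hB) B' (pw_sub hB') hne
      exact (Finset.disjoint_left.mp hdisj h1) h2
  rw [card_Nc hreg w] at this
  exact this

lemma pair_card (hV : Fintype.card V = 18) (hreg : G.IsRegularOfDegree 3)
    {A B : Finset V} (hdom : G.IsDominatingSet (A ∪ B)) : 5 ≤ A.card + B.card := by
  have := dom_card hV hreg hdom
  have := Finset.card_union_le A B
  omega


theorem no_ten (hV : Fintype.card V = 18) (hreg : G.IsRegularOfDegree 3)
    {P : Finset (Finset V)} (hP : G.IsCoalitionPartition P) : P.card ≠ 10 := by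
  intro h10
  classical
  set Q1 := P.filter (fun A => A.card = 1) with hQ1def
  set R1 := P.filter (fun A => ¬ A.card = 1) with hR1def
  set Q2 := R1.filter (fun A => A.card = 2) with hQ2def
  set R2 := R1.filter (fun A => ¬ A.card = 2) with hR2def
  set Q3 := R2.filter (fun A => A.card = 3) with hQ3def
  set Q4 := R2.filter (fun A => ¬ A.card = 3) with hQ4def
  have hpos : ∀ A ∈ P, 1 ≤ A.card := fun A hA => card_pos.mpr (hP.1 A hA)
  have hQ1mem : ∀ {A : Finset V}, A ∈ Q1 ↔ A ∈ P ∧ A.card = 1 := by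
    intro A; simp [hQ1def]
  have hQ2mem : ∀ {A : Finset V}, A ∈ Q2 ↔ A ∈ P ∧ A.card = 2 := by
    intro A
    simp only [hQ2def, hR1def, mem_filter]
    constructor
    · rintro ⟨⟨hp, _⟩, h2⟩; exact ⟨hp, h2⟩
    · rintro ⟨hp, h2⟩; exact ⟨⟨hp, by omega⟩, h2⟩
  have hQ3mem : ∀ {A : Finset V}, A ∈ Q3 ↔ A ∈ P ∧ A.card = 3 := by
    intro A
    simp only [hQ3def, hR2def, hR1def, mem_filter]
    constructor
    · rintro ⟨⟨⟨hp, _⟩, _⟩, h3⟩; exact ⟨hp, h3⟩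
    · rintro ⟨hp, h3⟩; exact ⟨⟨⟨hp, by omega⟩, by omega⟩, h3⟩
  have hQ4mem : ∀ {A : Finset V}, A ∈ Q4 ↔ A ∈ P ∧ 4 ≤ A.card := by
    intro A
    simp only [hQ4def, hR2def, hR1def, mem_filter]
    constructor
    · rintro ⟨⟨⟨hp, h1⟩, h2⟩, h3⟩
      have := hpos A hp
      exact ⟨hp, by omega⟩
    · rintro ⟨hp, h4⟩; exact ⟨⟨⟨hp, by omega⟩, by omega⟩, by omega⟩
  have hc1 : Q1.card + R1.card = 10 := by
    rw [hQ1def, hR1def, ← h10]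
    exact card_filter_add_card_filter_not (p := fun (A : Finset V) => Finset.card A = 1)
  have hc2 : Q2.card + R2.card = R1.card := by
    rw [hQ2def, hR2def]
    exact card_filter_add_card_filter_not (p := fun (A : Finset V) => Finset.card A = 2)
  have hc3 : Q3.card + Q4.card = R2.card := by
    rw [hQ3def, hQ4def]
    exact card_filter_add_card_filter_not (p := fun (A : Finset V) => Finset.card A = 3)
  have hsum : ∑ A ∈ P, A.card = 18 := by rw [sum_card hP, hV]
  have hwle : ∑ A ∈ P, min A.card 4 ≤ 18 := by
    calc ∑ A ∈ P, min A.card 4 ≤ ∑ A ∈ P, A.card :=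
          Finset.sum_le_sum (fun A _ => min_le_left _ _)
      _ = 18 := hsum
  have hs1 : ∑ A ∈ P, min A.card 4 = ∑ A ∈ Q1, min A.card 4 + ∑ A ∈ R1, min A.card 4 :=
    (Finset.sum_filter_add_sum_filter_not P (fun A => A.card = 1) (fun A => min A.card 4)).symm
  have hs2 : ∑ A ∈ R1, min A.card 4 = ∑ A ∈ Q2, min A.card 4 + ∑ A ∈ R2, min A.card 4 :=
    (Finset.sum_filter_add_sum_filter_not R1 (fun A => A.card = 2) (fun A => min A.card 4)).symm
  have hs3 : ∑ A ∈ R2, min A.card 4 = ∑ A ∈ Q3, min A.card 4 + ∑ A ∈ Q4, min A.card 4 :=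
    (Finset.sum_filter_add_sum_filter_not R2 (fun A => A.card = 3) (fun A => min A.card 4)).symm
  have e1 : ∑ A ∈ Q1, min A.card 4 = Q1.card * 1 := by
    apply Finset.sum_const_nat
    intro A hA
    have h := (hQ1mem.mp hA).2
    omega
  have e2 : ∑ A ∈ Q2, min A.card 4 = Q2.card * 2 := by
    apply Finset.sum_const_nat
    intro A hA
    have h := (hQ2mem.mp hA).2
    omega
  have e3 : ∑ A ∈ Q3, min A.card 4 = Q3.card * 3 := by
    apply Finset.sum_const_nat
    intro A hA
    have h := (hQ3mem.mp hA).2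
    omega
  have e4 : ∑ A ∈ Q4, min A.card 4 = Q4.card * 4 := by
    apply Finset.sum_const_nat
    intro A hA
    have h := (hQ4mem.mp hA).2
    omega
  have harith : Q1.card * 1 + Q2.card * 2 + Q3.card * 3 + Q4.card * 4 ≤ 18 := by
    rw [hs1, hs2, hs3, e1, e2, e3, e4] at hwle; omega
  -- partners with size information
  have hpartner : ∀ A ∈ P, ∃ B ∈ P, B ≠ A ∧ G.IsDominatingSet (A ∪ B)
      ∧ 5 ≤ A.card + B.card := by
    intro A hA
    obtain ⟨B, hBP, hne, hdom⟩ := partner_exists hV hreg hP hA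
    exact ⟨B, hBP, hne, hdom, pair_card hV hreg hdom⟩
  -- singles have a partner in Q4
  have hsingle : ∀ A ∈ Q1, ∃ B ∈ Q4, A ∈ pw G P B := by
    intro A hA
    rcases hQ1mem.mp hA with ⟨hAP, hA1⟩
    obtain ⟨B, hBP, hne, hdom, h5⟩ := hpartner A hAP
    refine ⟨B, hQ4mem.mpr ⟨hBP, by omega⟩, mem_pw.mpr ⟨hAP, ?_, by rwa [union_comm]⟩⟩
    intro h; exact hne h.symm
  -- case on number of big parts
  have hd2 : Q4.card ≤ 2 := by omega
  rcases Nat.lt_or_ge Q4.card 1 with hd | hd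
  · -- d = 0 : no singles possible
    have hQ4e : Q4 = ∅ := card_eq_zero.mp (by omega)
    have ha0 : Q1.card = 0 := by
      rw [card_eq_zero]
      by_contra h
      obtain ⟨A, hA⟩ := nonempty_iff_ne_empty.mpr h
      obtain ⟨B, hB, _⟩ := hsingle A hA
      rw [hQ4e] at hB; exact notMem_empty B hB
    omega
  rcases Nat.lt_or_ge Q4.card 2 with hd1 | hd2'
  · -- d = 1
    have hd : Q4.card = 1 := by omega
    obtain ⟨W, hWeq⟩ := card_eq_one.mp hd
    have hWQ4 : W ∈ Q4 := hWeq ▸ mem_singleton_self W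
    rcases hQ4mem.mp hWQ4 with ⟨hWP, hWcard⟩
    have hQ1pw : Q1 ⊆ pw G P W := by
      intro A hA
      obtain ⟨B, hB, hApw⟩ := hsingle A hA
      rw [hWeq, mem_singleton] at hB
      rwa [hB] at hApw
    have ha4 : Q1.card ≤ 4 :=
      le_trans (card_le_card hQ1pw) (pw_card_le hV hreg hP hWP)
    have hc0 : Q3.card = 0 := by omega
    have hQ3e : Q3 = ∅ := card_eq_zero.mp hc0
    have hQ2pw : Q2 ⊆ pw G P W := by
      intro A hA
      rcases hQ2mem.mp hA with ⟨hAP, hA2⟩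
      obtain ⟨B, hBP, hne, hdom, h5⟩ := hpartner A hAP
      have hB4 : 4 ≤ B.card := by
        by_contra h
        have hB3 : B.card = 3 := by omega
        have : B ∈ Q3 := hQ3mem.mpr ⟨hBP, hB3⟩
        rw [hQ3e] at this; exact notMem_empty B this
      have hBQ4 : B ∈ Q4 := hQ4mem.mpr ⟨hBP, hB4⟩
      rw [hWeq, mem_singleton] at hBQ4
      subst hBQ4
      exact mem_pw.mpr ⟨hAP, fun h => hne h.symm, by rwa [union_comm]⟩
    have hdisj12 : Disjoint Q1 Q2 := by
      rw [Finset.disjoint_left]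
      intro A h1 h2
      have := (hQ1mem.mp h1).2
      have := (hQ2mem.mp h2).2
      omega
    have : Q1.card + Q2.card ≤ 4 := by
      rw [← card_union_of_disjoint hdisj12]
      exact le_trans (card_le_card (union_subset hQ1pw hQ2pw)) (pw_card_le hV hreg hP hWP)
    omega
  · -- d = 2
    have hd : Q4.card = 2 := by omega
    obtain ⟨W1, W2, hne12, hQ4eq⟩ := card_eq_two.mp hd
    have hW1Q4 : W1 ∈ Q4 := by rw [hQ4eq]; exact mem_insert_self _ _
    have hW2Q4 : W2 ∈ Q4 := by rw [hQ4eq]; simp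
    rcases hQ4mem.mp hW1Q4 with ⟨hW1P, hW1card⟩
    rcases hQ4mem.mp hW2Q4 with ⟨hW2P, hW2card⟩
    have hoc : Q2.card + 2 * Q3.card ≤ 2 := by omega
    -- every small part is a partner of W1 or W2
    have hsmall : ∀ A ∈ Q1 ∪ Q2 ∪ Q3, A ∈ pw G P W1 ∪ pw G P W2 := by
      intro A hA
      have hAP : A ∈ P := by
        rcases mem_union.mp hA with h | h
        · rcases mem_union.mp h with h | h
          · exact (hQ1mem.mp h).1
          · exact (hQ2mem.mp h).1
        · exact (hQ3mem.mp h).1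
      obtain ⟨B, hBP, hne, hdom, h5⟩ := hpartner A hAP
      have hB4 : 4 ≤ B.card := by
        rcases mem_union.mp hA with h | h
        · rcases mem_union.mp h with h | h
          · have := (hQ1mem.mp h).2; omega
          · -- A has card 2, so Q2 nonempty hence Q3 empty
            have hA2 := (hQ2mem.mp h).2
            have hb1 : 1 ≤ Q2.card := card_pos.mpr ⟨A, h⟩
            have hc0 : Q3.card = 0 := by omega
            by_contra hcon
            have hB3 : B.card = 3 := by omega
            have : B ∈ Q3 := hQ3mem.mpr ⟨hBP, hB3⟩
            rw [card_eq_zero.mp hc0] at this; exact notMem_empty B this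
        · -- A has card 3
          have hA3 := (hQ3mem.mp h).2
          have hcge : 1 ≤ Q3.card := card_pos.mpr ⟨A, h⟩
          have hb0 : Q2.card = 0 := by omega
          have hc1' : Q3.card = 1 := by omega
          by_contra hcon
          have : B.card = 2 ∨ B.card = 3 := by omega
          rcases this with hB2 | hB3
          · have : B ∈ Q2 := hQ2mem.mpr ⟨hBP, hB2⟩
            rw [card_eq_zero.mp hb0] at this; exact notMem_empty B this
          · have hBQ3 : B ∈ Q3 := hQ3mem.mpr ⟨hBP, hB3⟩
            obtain ⟨C, hCeq⟩ := card_eq_one.mp hc1'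
            rw [hCeq, mem_singleton] at hBQ3
            have hAQ3 : A ∈ Q3 := h
            rw [hCeq, mem_singleton] at hAQ3
            exact hne (hBQ3.trans hAQ3.symm)
      have hBQ4 : B ∈ Q4 := hQ4mem.mpr ⟨hBP, hB4⟩
      rw [hQ4eq, mem_insert, mem_singleton] at hBQ4
      rcases hBQ4 with rfl | rfl
      · exact mem_union_left _ (mem_pw.mpr ⟨hAP, fun h => hne h.symm, by rwa [union_comm]⟩)
      · exact mem_union_right _ (mem_pw.mpr ⟨hAP, fun h => hne h.symm, by rwa [union_comm]⟩)
    -- cardinalities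
    have hdisj12 : Disjoint Q1 Q2 := by
      rw [Finset.disjoint_left]; intro A h1 h2
      have := (hQ1mem.mp h1).2; have := (hQ2mem.mp h2).2; omega
    have hdisj3 : Disjoint (Q1 ∪ Q2) Q3 := by
      rw [Finset.disjoint_left]; intro A h1 h3
      have h3c := (hQ3mem.mp h3).2
      rcases mem_union.mp h1 with h | h
      · have := (hQ1mem.mp h).2; omega
      · have := (hQ2mem.mp h).2; omega
    have hcards : (Q1 ∪ Q2 ∪ Q3).card = 8 := by
      rw [card_union_of_disjoint hdisj3, card_union_of_disjoint hdisj12]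
      omega
    have hpw1le := pw_card_le hV hreg hP hW1P
    have hpw2le := pw_card_le hV hreg hP hW2P
    have hsub : Q1 ∪ Q2 ∪ Q3 ⊆ pw G P W1 ∪ pw G P W2 := hsmall
    have huncard : (pw G P W1 ∪ pw G P W2).card ≤ 8 :=
      le_trans (card_union_le _ _) (by omega)
    have hEq : Q1 ∪ Q2 ∪ Q3 = pw G P W1 ∪ pw G P W2 :=
      eq_of_subset_of_card_le hsub (by omega)
    have huncard8 : (pw G P W1 ∪ pw G P W2).card = 8 := by rw [← hEq]; exact hcards
    have hintcard : (pw G P W1 ∩ pw G P W2).card = 0 := by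
      have := Finset.card_union_add_card_inter (pw G P W1) (pw G P W2)
      omega
    have hpw1c : (pw G P W1).card = 4 := by
      have := Finset.card_union_add_card_inter (pw G P W1) (pw G P W2)
      omega
    have hpw2c : (pw G P W2).card = 4 := by
      have := Finset.card_union_add_card_inter (pw G P W1) (pw G P W2)
      omega
    have hsmallcard : ∀ B ∈ pw G P W1 ∪ pw G P W2, B.card ≤ 3 := by
      intro B hB
      rw [← hEq] at hB
      rcases mem_union.mp hB with h | h
      · rcases mem_union.mp h with h | h
        · have := (hQ1mem.mp h).2; omega
        · have := (hQ2mem.mp h).2; omega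
      · have := (hQ3mem.mp h).2; omega
    -- endgame
    have hnd1 : ¬ G.IsDominatingSet W1 := part_nondom hV hreg hP hW1P
    rw [SimpleGraph.IsDominatingSet, not_forall] at hnd1
    obtain ⟨w, hw⟩ := hnd1
    have hW1w : W1 ∩ Nc G w = ∅ := by
      rw [← not_nonempty_iff_eq_empty]
      exact fun h => hw (dominatesVert_iff.mpr h)
    set f : Finset V → V := fun B => if h : (B ∩ Nc G w).Nonempty then h.choose else w with hfdef
    have hfmem : ∀ B ∈ pw G P W1, f B ∈ B ∩ Nc G w := by
      intro B hB
      rcases mem_pw.mp hB with ⟨hBP, hBne, hBdom⟩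
      have h1 : ((W1 ∪ B) ∩ Nc G w).Nonempty := dominatesVert_iff.mp (hBdom w)
      rw [union_inter_distrib_right, hW1w, empty_union] at h1
      simp only [hfdef, dif_pos h1]
      exact h1.choose_spec
    have hinj : Set.InjOn f (pw G P W1) := by
      intro B hB B' hB' heq
      have h1 := (mem_inter.mp (hfmem B hB)).1
      have h2 := (mem_inter.mp (hfmem B' hB')).1
      rw [heq] at h1
      by_contra hcon
      exact (Finset.disjoint_left.mp
        (hP.2.1 B (pw_sub hB) B' (pw_sub hB') hcon) h1) h2
    have himage : (pw G P W1).image f = Nc G w := by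
      apply eq_of_subset_of_card_le
      · intro x hx
        obtain ⟨B, hB, rfl⟩ := mem_image.mp hx
        exact (mem_inter.mp (hfmem B hB)).2
      · rw [Finset.card_image_of_injOn hinj, hpw1c, card_Nc hreg]
    have hW2w : W2 ∩ Nc G w = ∅ := by
      rw [← not_nonempty_iff_eq_empty]
      rintro ⟨x, hx⟩
      rcases mem_inter.mp hx with ⟨hxW2, hxN⟩
      have hxim : x ∈ (pw G P W1).image f := by rw [himage]; exact hxN
      obtain ⟨Q, hQ, hfQ⟩ := mem_image.mp hxim
      have hxQ : x ∈ Q := by rw [← hfQ]; exact (mem_inter.mp (hfmem Q hQ)).1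
      have hQcard : Q.card ≤ 3 := hsmallcard Q (mem_union_left _ hQ)
      have hQW2 : Q ≠ W2 := by intro h; rw [h] at hQcard; omega
      exact (Finset.disjoint_left.mp
        (hP.2.1 Q (pw_sub hQ) W2 hW2P hQW2) hxQ) hxW2
    have hpw2ne : (pw G P W2).Nonempty := card_pos.mp (by omega)
    obtain ⟨R, hR⟩ := hpw2ne
    rcases mem_pw.mp hR with ⟨hRP, hRne, hRdom⟩
    have h1 : ((W2 ∪ R) ∩ Nc G w).Nonempty := dominatesVert_iff.mp (hRdom w)
    rw [union_inter_distrib_right, hW2w, empty_union] at h1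
    obtain ⟨x, hx⟩ := h1
    rcases mem_inter.mp hx with ⟨hxR, hxN⟩
    have hxim : x ∈ (pw G P W1).image f := by rw [himage]; exact hxN
    obtain ⟨Q, hQ, hfQ⟩ := mem_image.mp hxim
    have hxQ : x ∈ Q := by rw [← hfQ]; exact (mem_inter.mp (hfmem Q hQ)).1
    by_cases hQR : Q = R
    · subst hQR
      have : Q ∈ pw G P W1 ∩ pw G P W2 := mem_inter.mpr ⟨hQ, hR⟩
      rw [card_eq_zero.mp hintcard] at this
      exact notMem_empty Q this
    · exact (Finset.disjoint_left.mp
        (hP.2.1 Q (pw_sub hQ) R hRP hQR) hxQ) hxR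

theorem merge_down (hV : Fintype.card V = 18) (hreg : G.IsRegularOfDegree 3)
    {P : Finset (Finset V)} (hP : G.IsCoalitionPartition P) (h11 : 11 ≤ P.card) :
    ∃ P' : Finset (Finset V), G.IsCoalitionPartition P' ∧ P'.card + 1 = P.card := by
  classical
  obtain ⟨A, hA⟩ := card_pos.mp (by omega : 0 < P.card)
  have hApos : A.Nonempty := hP.1 A hA
  -- find a part B whose union with A is NOT dominating
  have hsd : 1 ≤ ((P.erase A) \ pw G P A).card := by
    have h1 : (pw G P A).card ≤ 4 := pw_card_le hV hreg hP hA
    have e1 : (P.erase A).card = P.card - 1 := card_erase_of_mem hA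
    have h3 := Finset.card_sdiff_add_card (P.erase A) (pw G P A)
    have h4 : (P.erase A).card ≤ ((P.erase A) ∪ pw G P A).card :=
      card_le_card subset_union_left
    omega
  obtain ⟨B, hB⟩ := card_pos.mp hsd
  rcases mem_sdiff.mp hB with ⟨hBe, hBnpw⟩
  rcases mem_erase.mp hBe with ⟨hBne, hBP⟩
  have hBpos : B.Nonempty := hP.1 B hBP
  have hnotdom : ¬ G.IsDominatingSet (A ∪ B) := by
    intro h
    exact hBnpw (mem_pw.mpr ⟨hBP, hBne, h⟩)
  have hdisjAB : Disjoint A B := hP.2.1 A hA B hBP (fun h => hBne h.symm)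
  have hnotinP' : ∀ C ∈ P, C ≠ A → C ≠ A ∪ B := by
    intro C hC hCA h
    have hdisj := hP.2.1 A hA C hC (fun hh => hCA hh.symm)
    have hsub : A ⊆ C := by rw [h]; exact subset_union_left
    obtain ⟨a, ha⟩ := hApos
    exact (disjoint_left.mp hdisj ha) (hsub ha)
  set P' := insert (A ∪ B) ((P.erase A).erase B) with hP'def
  have hnew_notmem : A ∪ B ∉ (P.erase A).erase B := by
    intro h
    have hCP : A ∪ B ∈ P := mem_of_mem_erase (mem_of_mem_erase h)
    have hCA : A ∪ B ≠ A := (mem_erase.mp (mem_of_mem_erase h)).1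
    exact hnotinP' _ hCP hCA rfl
  have hmemP' : ∀ {C : Finset V}, C ∈ P' ↔ C = A ∪ B ∨ (C ∈ P ∧ C ≠ A ∧ C ≠ B) := by
    intro C
    simp only [hP'def, mem_insert, mem_erase]
    tauto
  have hcard : P'.card + 1 = P.card := by
    have e1 : (P.erase A).card = P.card - 1 := card_erase_of_mem hA
    have e2 : ((P.erase A).erase B).card = (P.erase A).card - 1 :=
      card_erase_of_mem (mem_erase.mpr ⟨hBne, hBP⟩)
    rw [hP'def, card_insert_of_notMem hnew_notmem]
    omega
  refine ⟨P', ⟨?_, ?_, ?_, ?_⟩, hcard⟩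
  · -- nonempty
    intro C hC
    rcases hmemP'.mp hC with rfl | ⟨hCP, _, _⟩
    · exact hApos.mono subset_union_left
    · exact hP.1 C hCP
  · -- pairwise disjoint
    intro C hC D hD hne
    rcases hmemP'.mp hC with rfl | ⟨hCP, hCA, hCB⟩
    · rcases hmemP'.mp hD with rfl | ⟨hDP, hDA, hDB⟩
      · exact absurd rfl hne
      · exact disjoint_union_left.mpr
          ⟨hP.2.1 A hA D hDP (fun h => hDA h.symm),
           hP.2.1 B hBP D hDP (fun h => hDB h.symm)⟩
    · rcases hmemP'.mp hD with rfl | ⟨hDP, hDA, hDB⟩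
      · exact (disjoint_union_left.mpr
          ⟨hP.2.1 A hA C hCP (fun h => hCA h.symm),
           hP.2.1 B hBP C hCP (fun h => hCB h.symm)⟩).symm
      · exact hP.2.1 C hCP D hDP hne
  · -- cover
    intro v
    obtain ⟨C, hC, hvC⟩ := hP.2.2.1 v
    by_cases hCA : C = A
    · exact ⟨A ∪ B, mem_insert_self _ _, mem_union_left _ (hCA ▸ hvC)⟩
    by_cases hCB : C = B
    · exact ⟨A ∪ B, mem_insert_self _ _, mem_union_right _ (hCB ▸ hvC)⟩
    · exact ⟨C, hmemP'.mpr (Or.inr ⟨hC, hCA, hCB⟩), hvC⟩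
  · -- coalition condition
    intro C hC
    right
    rcases hmemP'.mp hC with rfl | ⟨hCP, hCA, hCB⟩
    · refine ⟨hnotdom, ?_⟩
      obtain ⟨D, hDP, hDneA, hDdom⟩ := partner_exists hV hreg hP hA
      have hDB : D ≠ B := by
        intro h
        exact hnotdom (by rwa [h] at hDdom)
      refine ⟨D, hmemP'.mpr (Or.inr ⟨hDP, hDneA, hDB⟩),
        hnotinP' D hDP hDneA, part_nondom hV hreg hP hDP, ?_⟩
      exact dom_mono (union_subset_union subset_union_left (subset_refl D)) hDdom
    · refine ⟨part_nondom hV hreg hP hCP, ?_⟩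
      obtain ⟨E, hEP, hEneC, hEdom⟩ := partner_exists hV hreg hP hCP
      by_cases hEAB : E = A ∨ E = B
      · refine ⟨A ∪ B, mem_insert_self _ _, ?_, hnotdom, ?_⟩
        · exact fun h => (hnotinP' C hCP hCA) h.symm
        · apply dom_mono _ hEdom
          apply union_subset_union (subset_refl C)
          rcases hEAB with rfl | rfl
          · exact subset_union_left
          · exact subset_union_right
      · push_neg at hEAB
        exact ⟨E, hmemP'.mpr (Or.inr ⟨hEP, hEAB.1, hEAB.2⟩), hEneC,
          part_nondom hV hreg hP hEP, hEdom⟩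

theorem card_le_nine (hV : Fintype.card V = 18) (hreg : G.IsRegularOfDegree 3)
    {P : Finset (Finset V)} (hP : G.IsCoalitionPartition P) : P.card ≤ 9 := by
  have key : ∀ n : ℕ, ∀ P : Finset (Finset V), G.IsCoalitionPartition P → P.card ≠ 10 + n := by
    intro n
    induction n with
    | zero => intro P hP; exact no_ten hV hreg hP
    | succ n ih =>
      intro P hP hcard
      obtain ⟨P', hP', hc⟩ := merge_down hV hreg hP (by omega)
      exact ih P' hP' (by omega)
  by_contra h
  exact key (P.card - 10) P hP (by omega)

end Partition

end CoalitionAux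

set_option maxRecDepth 4000
namespace CubicWitness
open CoalitionAux Finset

def edges : List (Nat × Nat) := [(0,2),(0,5),(0,17),(1,4),(1,8),(1,12),(2,4),(2,17),(3,4),(3,13),(3,14),(5,10),(5,17),(6,7),(6,14),(6,16),(7,10),(7,15),(8,12),(8,15),(9,11),(9,13),(9,16),(10,11),(11,14),(12,16),(13,15)]

def adjB (a b : Nat) : Bool :=
  edges.any (fun e => (e.1 == a && e.2 == b) || (e.1 == b && e.2 == a))

lemma adjB_symm : ∀ a b : Fin 18, adjB a.val b.val = true → adjB b.val a.val = true := by decide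
lemma adjB_irrefl : ∀ a : Fin 18, ¬ adjB a.val a.val = true := by decide

def G18 : SimpleGraph (Fin 18) where
  Adj a b := adjB a.val b.val = true
  symm := ⟨fun a b h => adjB_symm a b h⟩
  loopless := ⟨fun a h => adjB_irrefl a h⟩

instance : DecidableRel G18.Adj :=
  fun a b => inferInstanceAs (Decidable (adjB a.val b.val = true))

def P9 : Finset (Finset (Fin 18)) :=
  {{0}, {2}, {8}, {11}, {12}, {14}, {1,6,10,13}, {3,7,9,17}, {4,5,15,16}}

lemma hreg18 : G18.IsRegularOfDegree 3 := by
  show ∀ v : Fin 18, G18.degree v = 3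
  decide

lemma hcard9 : P9.card = 9 := by
  unfold P9
  rw [card_insert_of_notMem (by simp only [mem_insert, mem_singleton]; decide)]
  rw [card_insert_of_notMem (by simp only [mem_insert, mem_singleton]; decide)]
  rw [card_insert_of_notMem (by simp only [mem_insert, mem_singleton]; decide)]
  rw [card_insert_of_notMem (by simp only [mem_insert, mem_singleton]; decide)]
  rw [card_insert_of_notMem (by simp only [mem_insert, mem_singleton]; decide)]
  rw [card_insert_of_notMem (by simp only [mem_insert, mem_singleton]; decide)]
  rw [card_insert_of_notMem (by simp only [mem_insert, mem_singleton]; decide)]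
  rw [card_insert_of_notMem (by simp only [mem_singleton]; decide)]
  rw [card_singleton]

lemma memS0 : ({0} : Finset (Fin 18)) ∈ P9 := by simp [P9]
lemma memS2 : ({2} : Finset (Fin 18)) ∈ P9 := by simp [P9]
lemma memS8 : ({8} : Finset (Fin 18)) ∈ P9 := by simp [P9]
lemma memS11 : ({11} : Finset (Fin 18)) ∈ P9 := by simp [P9]
lemma memS12 : ({12} : Finset (Fin 18)) ∈ P9 := by simp [P9]
lemma memS14 : ({14} : Finset (Fin 18)) ∈ P9 := by simp [P9]
lemma memA4 : ({1,6,10,13} : Finset (Fin 18)) ∈ P9 := by simp [P9]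
lemma memB4 : ({3,7,9,17} : Finset (Fin 18)) ∈ P9 := by simp [P9]
lemma memC4 : ({4,5,15,16} : Finset (Fin 18)) ∈ P9 := by simp [P9]

lemma hpart9 : G18.IsCoalitionPartition P9 := by
  refine ⟨?_, ?_, ?_, ?_⟩
  · intro A hA
    simp only [P9, mem_insert, mem_singleton] at hA
    rcases hA with rfl|rfl|rfl|rfl|rfl|rfl|rfl|rfl|rfl <;> decide
  · intro A hA B hB hne
    simp only [P9, mem_insert, mem_singleton] at hA hB
    rcases hA with rfl|rfl|rfl|rfl|rfl|rfl|rfl|rfl|rfl <;>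
      rcases hB with rfl|rfl|rfl|rfl|rfl|rfl|rfl|rfl|rfl <;>
      first
        | exact absurd rfl hne
        | decide
  · intro v
    fin_cases v
    · exact ⟨_, memS0, by decide⟩
    · exact ⟨_, memA4, by decide⟩
    · exact ⟨_, memS2, by decide⟩
    · exact ⟨_, memB4, by decide⟩
    · exact ⟨_, memC4, by decide⟩
    · exact ⟨_, memC4, by decide⟩
    · exact ⟨_, memA4, by decide⟩
    · exact ⟨_, memB4, by decide⟩
    · exact ⟨_, memS8, by decide⟩
    · exact ⟨_, memB4, by decide⟩
    · exact ⟨_, memA4, by decide⟩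
    · exact ⟨_, memS11, by decide⟩
    · exact ⟨_, memS12, by decide⟩
    · exact ⟨_, memA4, by decide⟩
    · exact ⟨_, memS14, by decide⟩
    · exact ⟨_, memC4, by decide⟩
    · exact ⟨_, memC4, by decide⟩
    · exact ⟨_, memB4, by decide⟩
  · intro A hA
    simp only [P9, mem_insert, mem_singleton] at hA
    rcases hA with rfl|rfl|rfl|rfl|rfl|rfl|rfl|rfl|rfl
    · exact Or.inr ⟨by decide, _, memA4, by decide, by decide, by decide⟩
    · exact Or.inr ⟨by decide, _, memA4, by decide, by decide, by decide⟩
    · exact Or.inr ⟨by decide, _, memB4, by decide, by decide, by decide⟩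
    · exact Or.inr ⟨by decide, _, memC4, by decide, by decide, by decide⟩
    · exact Or.inr ⟨by decide, _, memB4, by decide, by decide, by decide⟩
    · exact Or.inr ⟨by decide, _, memC4, by decide, by decide, by decide⟩
    · exact Or.inr ⟨by decide, _, memS0, by decide, by decide, by decide⟩
    · exact Or.inr ⟨by decide, _, memS8, by decide, by decide, by decide⟩
    · exact Or.inr ⟨by decide, _, memS11, by decide, by decide, by decide⟩

end CubicWitness

/-- There exists a cubic graph of order 18 whose coalition number equals 9. -/
theorem exists_cubic_order18_coalition_nine :
    ∃ G : SimpleGraph (Fin 18), ∃ _ : DecidableRel G.Adj, G.IsRegularOfDegree 3 ∧ G.coalitionNumber = 9 := by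
  refine ⟨CubicWitness.G18, inferInstance, CubicWitness.hreg18, ?_⟩
  have hV : Fintype.card (Fin 18) = 18 := by simp
  have hmem9 : 9 ∈ {k | ∃ P : Finset (Finset (Fin 18)),
      CubicWitness.G18.IsCoalitionPartition P ∧ P.card = k} :=
    ⟨CubicWitness.P9, CubicWitness.hpart9, CubicWitness.hcard9⟩
  have hb : ∀ k ∈ {k | ∃ P : Finset (Finset (Fin 18)),
      CubicWitness.G18.IsCoalitionPartition P ∧ P.card = k}, k ≤ 9 := by
    rintro k ⟨P, hP, rfl⟩
    exact CoalitionAux.card_le_nine hV CubicWitness.hreg18 hP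
  exact le_antisymm (csSup_le ⟨9, hmem9⟩ hb) (le_csSup ⟨9, hb⟩ hmem9)
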